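/- Let p1, p0, q1, q0 : ℝ × ℝ → ℝ be arbitrary functions and define f(x,y,z) = z² + p1(x,y)·z + p0(x,y) and g(x,y,z) = q1(x,y)·z + q0(x,y). Then the image under the projection Π(x,y,z) = (x,y) of the set {(x,y,z) ∈ ℝ³ : f(x,y,z) = 0 and g(x,y,z) = 0} is the union of the two sets {(x,y) ∈ ℝ² : S0(x,y) = 0, p1(x,y)² − 4·p0(x,y) ≥ 0, q1(x,y) ≠ 0} and {(x,y) ∈ ℝ² : S0(x,y) = 0, p1(x,y)² − 4·p0(x,y) ≥ 0, q1(x,y) = 0, q0(x,y) = 0}, where S0(x,y) = q0(x,y)² − p1(x,y)·q1(x,y)·q0(x,y) + p0(x,y)·q1(x,y)² is the resultant of f and g with respect to z. -/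

import Mathlib

/-- Projection of the intersection of a quadric-in-z surface with a
    linear-in-z surface. -/
theorem stmt_18 (p1 p0 q1 q0 : ℝ × ℝ → ℝ) :
    (fun w : ℝ × ℝ × ℝ => (w.1, w.2.1)) ''
      {w : ℝ × ℝ × ℝ |
        w.2.2 ^ 2 + p1 (w.1, w.2.1) * w.2.2 + p0 (w.1, w.2.1) = 0 ∧
        q1 (w.1, w.2.1) * w.2.2 + q0 (w.1, w.2.1) = 0} =
    {v : ℝ × ℝ |
        q0 v ^ 2 - p1 v * q1 v * q0 v + p0 v * q1 v ^ 2 = 0 ∧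
        p1 v ^ 2 - 4 * p0 v ≥ 0 ∧
        q1 v ≠ 0} ∪
    {v : ℝ × ℝ |
        q0 v ^ 2 - p1 v * q1 v * q0 v + p0 v * q1 v ^ 2 = 0 ∧
        p1 v ^ 2 - 4 * p0 v ≥ 0 ∧
        q1 v = 0 ∧ q0 v = 0} := by
  ext ⟨a, b⟩
  simp only [Set.mem_image, Set.mem_setOf_eq, Set.mem_union, Prod.mk.injEq, Prod.exists]
  constructor
  · rintro ⟨x, y, z, ⟨hf, hg⟩, hx, hy⟩
    subst hx; subst hy
    have hdisc : p1 (x, y) ^ 2 - 4 * p0 (x, y) ≥ 0 := by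
      nlinarith [sq_nonneg (2 * z + p1 (x, y))]
    by_cases hq : q1 (x, y) = 0
    · right
      have hq0 : q0 (x, y) = 0 := by rw [hq] at hg; linarith
      exact ⟨by rw [hq, hq0]; ring, hdisc, hq, hq0⟩
    · left
      refine ⟨?_, hdisc, hq⟩
      linear_combination (q1 (x, y)) ^ 2 * hf +
        (q0 (x, y) - q1 (x, y) * z - p1 (x, y) * q1 (x, y)) * hg
  · rintro (⟨hS, hd, hq⟩ | ⟨hS, hd, hq1, hq0⟩)
    · refine ⟨a, b, -q0 (a, b) / q1 (a, b), ⟨?_, ?_⟩, rfl, rfl⟩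
      · field_simp
        linear_combination hS
      · field_simp
        ring
    · refine ⟨a, b, (-p1 (a, b) + Real.sqrt (p1 (a, b) ^ 2 - 4 * p0 (a, b))) / 2,
        ⟨?_, ?_⟩, rfl, rfl⟩
      · have h := Real.sq_sqrt hd
        nlinarith [h]
      · rw [hq1, hq0]; ring
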